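/- For any integer m > 1, there exist infinitely many positive integers k such that k ≢ -1 (mod q) for every prime q dividing m - 1, and k·m^n + 1 is composite for every positive integer n. -/

import Mathlib

set_option maxHeartbeats 1000000


lemma cover_res_b : ((List.range 144).all fun r =>
    (r % 3 == 2) || (r % 4 == 3) || (r % 6 == 4) || (r % 8 == 5) || (r % 9 == 6) ||
    (r % 12 == 6) || (r % 16 == 9) || (r % 18 == 12) || (r % 24 == 1) || (r % 36 == 0) ||
    (r % 48 == 33)) = true := by decide

lemma cover_res : ∀ r : ℕ, r < 144 →
    (r % 3 = 2 ∨ r % 4 = 3 ∨ r % 6 = 4 ∨ r % 8 = 5 ∨ r % 9 = 6 ∨ r % 12 = 6 ∨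
    r % 16 = 9 ∨ r % 18 = 12 ∨ r % 24 = 1 ∨ r % 36 = 0 ∨ r % 48 = 33) := by
  intro r hr
  have := List.all_eq_true.mp cover_res_b r (List.mem_range.mpr hr)
  simp only [Bool.or_eq_true, beq_iff_eq] at this
  tauto

lemma cover_all (n : ℕ) :
    n % 3 = 2 ∨ n % 4 = 3 ∨ n % 6 = 4 ∨ n % 8 = 5 ∨ n % 9 = 6 ∨ n % 12 = 6 ∨
    n % 16 = 9 ∨ n % 18 = 12 ∨ n % 24 = 1 ∨ n % 36 = 0 ∨ n % 48 = 33 := by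
  have h := cover_res (n % 144) (Nat.mod_lt _ (by norm_num))
  have e1 : n % 144 % 3 = n % 3 := Nat.mod_mod_of_dvd n (by norm_num)
  have e2 : n % 144 % 4 = n % 4 := Nat.mod_mod_of_dvd n (by norm_num)
  have e3 : n % 144 % 6 = n % 6 := Nat.mod_mod_of_dvd n (by norm_num)
  have e4 : n % 144 % 8 = n % 8 := Nat.mod_mod_of_dvd n (by norm_num)
  have e5 : n % 144 % 9 = n % 9 := Nat.mod_mod_of_dvd n (by norm_num)
  have e6 : n % 144 % 12 = n % 12 := Nat.mod_mod_of_dvd n (by norm_num)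
  have e7 : n % 144 % 16 = n % 16 := Nat.mod_mod_of_dvd n (by norm_num)
  have e8 : n % 144 % 18 = n % 18 := Nat.mod_mod_of_dvd n (by norm_num)
  have e9 : n % 144 % 24 = n % 24 := Nat.mod_mod_of_dvd n (by norm_num)
  have e10 : n % 144 % 36 = n % 36 := Nat.mod_mod_of_dvd n (by norm_num)
  have e11 : n % 144 % 48 = n % 48 := Nat.mod_mod_of_dvd n (by norm_num)
  rcases h with h|h|h|h|h|h|h|h|h|h|h
  · exact Or.inl (e1 ▸ h)
  · exact Or.inr (Or.inl (e2 ▸ h))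
  · exact Or.inr (Or.inr (Or.inl (e3 ▸ h)))
  · exact Or.inr (Or.inr (Or.inr (Or.inl (e4 ▸ h))))
  · exact Or.inr (Or.inr (Or.inr (Or.inr (Or.inl (e5 ▸ h)))))
  · exact Or.inr (Or.inr (Or.inr (Or.inr (Or.inr (Or.inl (e6 ▸ h))))))
  · exact Or.inr (Or.inr (Or.inr (Or.inr (Or.inr (Or.inr (Or.inl (e7 ▸ h)))))))
  · exact Or.inr (Or.inr (Or.inr (Or.inr (Or.inr (Or.inr (Or.inr (Or.inl (e8 ▸ h))))))))
  · exact Or.inr (Or.inr (Or.inr (Or.inr (Or.inr (Or.inr (Or.inr (Or.inr (Or.inl (e9 ▸ h)))))))))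
  · exact Or.inr (Or.inr (Or.inr (Or.inr (Or.inr (Or.inr (Or.inr (Or.inr (Or.inr (Or.inl (e10 ▸ h))))))))))
  · exact Or.inr (Or.inr (Or.inr (Or.inr (Or.inr (Or.inr (Or.inr (Or.inr (Or.inr (Or.inr (e11 ▸ h))))))))))



lemma bndA (y : ℤ) (hy : 3 ≤ y) : 3 < y*y + y + 1 := by nlinarith
lemma bndB (y : ℤ) (hy : 3 ≤ y) : 3 < y*y + 1 := by nlinarith
lemma bndC (y : ℤ) (hy : 3 ≤ y) : 3 < y*y - y + 1 := by nlinarith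

lemma reduceq (q P : ℤ) (hq : 0 < q) (hqq : ¬ q * q ∣ P) (hP : q < P) :
    ∃ M : ℤ, M ∣ P ∧ ¬ q ∣ M ∧ 1 < M := by
  by_cases h : q ∣ P
  · obtain ⟨c, rfl⟩ := h
    have hc : 1 < c := by nlinarith [mul_le_mul_of_nonneg_left (le_refl (1:ℤ)) (le_of_lt hq)]
    refine ⟨c, ⟨q, mul_comm q c⟩, ?_, hc⟩
    intro hqc
    exact hqq (mul_dvd_mul_left q hqc)
  · exact ⟨P, dvd_rfl, h, by linarith⟩

lemma cert_coprime (M N f g u v c : ℤ) (hM : M ∣ f) (hN : N ∣ g)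
    (h : u * f + v * g = c) (hc : c ∣ 6) (h2 : ¬ (2:ℤ) ∣ M) (h3 : ¬ (3:ℤ) ∣ M) :
    IsCoprime M N := by
  rw [Int.isCoprime_iff_gcd_eq_one]
  by_contra hg
  obtain ⟨p, hp, hpd⟩ := Nat.exists_prime_and_dvd hg
  have hgM : (↑(Int.gcd M N) : ℤ) ∣ M := Int.gcd_dvd_left M N
  have hgN : (↑(Int.gcd M N) : ℤ) ∣ N := Int.gcd_dvd_right M N
  have hpz : ((p:ℕ) : ℤ) ∣ (↑(Int.gcd M N) : ℤ) := Int.natCast_dvd_natCast.mpr hpd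
  have hpM : (p : ℤ) ∣ M := hpz.trans hgM
  have hpN : (p : ℤ) ∣ N := hpz.trans hgN
  have hpc : (p : ℤ) ∣ c := by
    have ha : (p:ℤ) ∣ u * f := ((hpM.trans hM).mul_left u)
    have hb : (p:ℤ) ∣ v * g := ((hpN.trans hN).mul_left v)
    have := dvd_add ha hb
    rwa [h] at this
  have hp6 : (p:ℤ) ∣ 6 := hpc.trans hc
  have hp6' : p ∣ 6 := by exact_mod_cast hp6
  have hple : p ≤ 6 := Nat.le_of_dvd (by norm_num) hp6'
  have h2le : 2 ≤ p := hp.two_le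
  interval_cases p
  · exact h2 (by exact_mod_cast hpM)
  · exact h3 (by exact_mod_cast hpM)
  · exact absurd hp (by decide)
  · exact absurd hp6' (by decide)
  · exact absurd hp (by decide)


lemma coprime_list_prod (a : ℤ) (l : List ℤ) (h : ∀ b ∈ l, IsCoprime a b) :
    IsCoprime a l.prod := by
  induction l with
  | nil => simpa using isCoprime_one_right
  | cons x xs ih =>
      rw [List.prod_cons]
      exact (h x List.mem_cons_self).mul_right
        (ih fun b hb => h b (List.mem_cons_of_mem _ hb))

lemma list_crt (l : List (ℤ × ℤ)) (h : l.Pairwise fun p q => IsCoprime p.2 q.2) :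
    ∃ x : ℤ, ∀ p ∈ l, p.2 ∣ x - p.1 := by
  induction l with
  | nil => exact ⟨0, by simp⟩
  | cons hd tl ih =>
      obtain ⟨hhd, htl⟩ := List.pairwise_cons.mp h
      obtain ⟨y, hy⟩ := ih htl
      have hcop : IsCoprime hd.2 ((tl.map Prod.snd).prod) := by
        refine coprime_list_prod _ _ ?_
        intro b hb
        obtain ⟨q, hq, rfl⟩ := List.mem_map.mp hb
        exact hhd q hq
      obtain ⟨u, v, huv⟩ := hcop
      refine ⟨y + (tl.map Prod.snd).prod * (v * (hd.1 - y)), ?_⟩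
      intro p hp
      rcases List.mem_cons.mp hp with rfl | hp
      · exact ⟨(p.1 - y) * (-u), by linear_combination (p.1 - y) * huv⟩
      · have h1 : p.2 ∣ (tl.map Prod.snd).prod :=
          List.dvd_prod (List.mem_map_of_mem (f := Prod.snd) hp)
        have h2 : y + (tl.map Prod.snd).prod * (v * (hd.1 - y)) - p.1
            = (y - p.1) + (tl.map Prod.snd).prod * (v * (hd.1 - y)) := by ring
        rw [h2]
        exact dvd_add (hy p hp) (h1.mul_right _)

lemma key (m : ℤ) (hm : 1 < m) (L : List (ℕ × ℕ × ℤ))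
    (hL : ∀ p ∈ L, 0 < p.2.1 ∧ 1 < p.2.2 ∧ p.2.2 ∣ m ^ p.2.1 - 1 ∧ IsCoprime p.2.2 (m - 1))
    (hpair : L.Pairwise fun p q => IsCoprime p.2.2 q.2.2)
    (hcov : ∀ n : ℕ, 1 ≤ n → ∃ p ∈ L, n % p.2.1 = p.1) :
    {k : ℕ | 0 < k ∧
      (∀ q : ℕ, q.Prime → (q : ℤ) ∣ m - 1 → ¬ ((k : ℤ) ≡ -1 [ZMOD q])) ∧
      ∀ n : ℕ, 1 ≤ n →
        1 < (k : ℤ) * m ^ n + 1 ∧ ¬ Prime ((k : ℤ) * m ^ n + 1)}.Infinite := by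
  classical
  set l : List (ℤ × ℤ) := (0, m - 1) :: L.map (fun p => (-(m ^ (p.2.1 - p.1)), p.2.2)) with hl
  have hpair' : l.Pairwise fun p q => IsCoprime p.2 q.2 := by
    rw [hl, List.pairwise_cons]
    constructor
    · intro q hq
      obtain ⟨p, hp, rfl⟩ := List.mem_map.mp hq
      exact ((hL p hp).2.2.2).symm
    · exact (List.pairwise_map).mpr (hpair.imp (fun h => h))
  obtain ⟨x, hx⟩ := list_crt l hpair'
  set Q : ℤ := (L.map fun p => p.2.2).prod with hQ
  have hQpos : 0 < Q := by
    refine List.prod_pos ?_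
    intro a ha
    obtain ⟨p, hp, rfl⟩ := List.mem_map.mp ha
    linarith [(hL p hp).2.1]
  set P : ℤ := (m - 1) * Q with hP
  have hm1 : (1:ℤ) ≤ m - 1 := by linarith
  have hPpos : 0 < P := by
    have : (0:ℤ) < m - 1 := by linarith
    exact mul_pos this hQpos
  have hQP : Q ≤ P := by
    nlinarith
  set f : ℕ → ℕ := fun t => (x % P + (t + 1) * P).toNat with hf
  have hrem : 0 ≤ x % P := Int.emod_nonneg x (ne_of_gt hPpos)
  have hfval : ∀ t : ℕ, (f t : ℤ) = x % P + (t + 1) * P := by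
    intro t
    have h2 : (0:ℤ) ≤ ((t:ℤ) + 1) * P := by positivity
    simp only [hf]
    rw [Int.toNat_of_nonneg (by linarith)]
  have hinj : Function.Injective f := by
    have hmono : StrictMono f := by
      intro a b hab
      have ha := hfval a
      have hb := hfval b
      have : (f a : ℤ) < (f b : ℤ) := by
        rw [ha, hb]
        have hab' : (a + 1 : ℤ) * P < (b + 1) * P := by
          have : ((a:ℤ) + 1) < (b:ℤ) + 1 := by exact_mod_cast by omega
          exact mul_lt_mul_of_pos_right this hPpos
        linarith
      exact_mod_cast this
    exact hmono.injective
  apply Set.infinite_of_injective_forall_mem hinj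
  intro t
  set k : ℕ := f t with hk
  have hkZ : (k : ℤ) = x % P + (t + 1) * P := hfval t
  have hkP : P ≤ (k : ℤ) := by
    have : (1:ℤ) * P ≤ (t+1) * P := by
      apply mul_le_mul_of_nonneg_right _ (le_of_lt hPpos)
      exact_mod_cast by omega
    linarith
  have hkx : P ∣ (k : ℤ) - x := by
    refine ⟨(t + 1) - x / P, ?_⟩
    rw [hkZ, Int.emod_def]
    ring
  constructor
  · -- 0 < k
    have : (0:ℤ) < (k:ℤ) := lt_of_lt_of_le hPpos hkP
    exact_mod_cast this
  constructor
  · -- condition on primes q dividing m-1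
    intro q hq hqd hcon
    have hm1d : (m - 1) ∣ P := ⟨Q, rfl⟩
    have hx0 : (m - 1) ∣ x - 0 := hx (0, m - 1) (by simp [hl])
    have hk0 : (m - 1) ∣ (k : ℤ) := by
      have := dvd_add (hm1d.trans hkx) hx0
      simpa using this
    have hqk : (q:ℤ) ∣ (k:ℤ) := hqd.trans hk0
    have hq1 : (q:ℤ) ∣ -1 - (k:ℤ) := Int.ModEq.dvd hcon
    have : (q:ℤ) ∣ (-1 : ℤ) := by
      have := dvd_add hq1 hqk
      simpa using this
    have h1 : (q:ℤ) ∣ (1:ℤ) := (dvd_neg.mp this)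
    have := Int.le_of_dvd one_pos h1
    have := hq.two_le
    omega
  · -- compositeness
    intro n hn
    have hmpos : (0:ℤ) < m := by linarith
    have hk1 : (1:ℤ) ≤ (k:ℤ) := by linarith [hkP, hPpos]
    have hpw : (1:ℤ) ≤ m ^ n := one_le_pow₀ (by linarith)
    have hV1 : 1 < (k : ℤ) * m ^ n + 1 := by nlinarith
    refine ⟨hV1, ?_⟩
    intro hPr
    obtain ⟨p, hpL, hpmod⟩ := hcov n hn
    obtain ⟨a, d, M⟩ := p
    obtain ⟨hd0, hM1, hMd, -⟩ := hL _ hpL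
    simp only at hpmod hd0 hM1 hMd ⊢
    have hxM : M ∣ x + m ^ (d - a) := by
      have := hx (-(m ^ (d - a)), M)
        (by
          rw [hl]
          refine List.mem_cons_of_mem _ ?_
          exact List.mem_map_of_mem hpL)
      simpa [sub_neg_eq_add] using this
    have hMQ : M ∣ Q := List.dvd_prod (List.mem_map_of_mem hpL)
    have hMP : M ∣ P := hMQ.mul_left _
    have hkM : M ∣ (k : ℤ) + m ^ (d - a) := by
      have := dvd_add (hMP.trans hkx) hxM
      have e : (k:ℤ) - x + (x + m ^ (d-a)) = (k:ℤ) + m ^ (d - a) := by ring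
      rwa [e] at this
    have han : a < d := by
      rw [← hpmod]
      exact Nat.mod_lt n hd0
    obtain ⟨j, hj⟩ : ∃ j, n = d * j + a :=
      ⟨n / d, by have := Nat.div_add_mod n d; omega⟩
    have hda : (d - a) + a = d := by omega
    have hmda : m ^ (d - a) * m ^ a = m ^ d := by rw [← pow_add, hda]
    have e1 : (k:ℤ) ≡ -m ^ (d - a) [ZMOD M] := by
      rw [Int.modEq_iff_dvd]
      have : -m ^ (d-a) - (k:ℤ) = -((k:ℤ) + m ^ (d - a)) := by ring
      rw [this]
      exact dvd_neg.mpr hkM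
    have e2 : m ^ d ≡ 1 [ZMOD M] := by
      rw [Int.modEq_iff_dvd]
      have : (1:ℤ) - m ^ d = -(m ^ d - 1) := by ring
      rw [this]
      exact dvd_neg.mpr hMd
    have e3 : (k:ℤ) * m ^ n + 1 ≡ (-m ^ (d - a)) * m ^ n + 1 [ZMOD M] :=
      ((e1.mul_right _).add_right 1)
    have e4 : (-m ^ (d - a) : ℤ) * m ^ n + 1 = -((m ^ d) ^ (j+1)) + 1 := by
      rw [hj, pow_add, pow_mul]
      linear_combination (-((m:ℤ) ^ d) ^ j) * hmda
    have e5 : ((m ^ d : ℤ)) ^ (j+1) ≡ 1 ^ (j+1) [ZMOD M] := e2.pow _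
    have e6 : (k:ℤ) * m ^ n + 1 ≡ 0 [ZMOD M] := by
      calc (k:ℤ) * m ^ n + 1 ≡ (-m ^ (d - a)) * m ^ n + 1 [ZMOD M] := e3
        _ = -((m ^ d) ^ (j+1)) + 1 := e4
        _ ≡ -(1 ^ (j+1)) + 1 [ZMOD M] := (e5.neg).add_right 1
        _ = 0 := by ring
    have hMV : M ∣ (k:ℤ) * m ^ n + 1 := (Int.modEq_zero_iff_dvd).mp e6
    have hMQle : M ≤ Q := Int.le_of_dvd hQpos hMQ
    have hkn : (k:ℤ) ≤ (k:ℤ) * m ^ n := le_mul_of_one_le_right (by linarith) hpw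
    have hMltV : M < (k:ℤ) * m ^ n + 1 := by linarith
    obtain ⟨c, hc⟩ := hMV
    rcases hPr.irreducible.isUnit_or_isUnit hc with hu | hu
    · rcases Int.isUnit_iff.mp hu with h | h <;> omega
    · rcases Int.isUnit_iff.mp hu with h | h
      · rw [h, mul_one] at hc; omega
      · rw [h] at hc; nlinarith [hc, hM1, hV1]


theorem stmt_14 (m : ℤ) (hm : 1 < m) :
    {k : ℕ | 0 < k ∧
      (∀ q : ℕ, q.Prime → (q : ℤ) ∣ m - 1 → ¬ ((k : ℤ) ≡ -1 [ZMOD q])) ∧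
      ∀ n : ℕ, 1 ≤ n →
        1 < (k : ℤ) * m ^ n + 1 ∧ ¬ Prime ((k : ℤ) * m ^ n + 1)}.Infinite := by
  by_cases hm2 : m = 2
  · subst hm2
    refine key 2 (by norm_num) [((2:ℕ), (3:ℕ), (7:ℤ)), ((3:ℕ), (4:ℕ), (5:ℤ)), ((4:ℕ), (6:ℕ), (9:ℤ)), ((5:ℕ), (8:ℕ), (17:ℤ)), ((6:ℕ), (9:ℕ), (73:ℤ)), ((6:ℕ), (12:ℕ), (13:ℤ)), ((9:ℕ), (16:ℕ), (257:ℤ)), ((12:ℕ), (18:ℕ), (19:ℤ)), ((1:ℕ), (24:ℕ), (241:ℤ)), ((0:ℕ), (36:ℕ), (4033:ℤ)), ((33:ℕ), (48:ℕ), (65281:ℤ))] ?_ ?_ ?_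
    · intro p hp
      simp only [List.mem_cons, List.not_mem_nil, or_false] at hp
      rcases hp with rfl | rfl | rfl | rfl | rfl | rfl | rfl | rfl | rfl | rfl | rfl
      · refine ⟨by norm_num, by norm_num, by norm_num, by
          rw [show (2:ℤ)-1 = 1 by norm_num]; exact isCoprime_one_right⟩
      · refine ⟨by norm_num, by norm_num, by norm_num, by
          rw [show (2:ℤ)-1 = 1 by norm_num]; exact isCoprime_one_right⟩
      · refine ⟨by norm_num, by norm_num, by norm_num, by
          rw [show (2:ℤ)-1 = 1 by norm_num]; exact isCoprime_one_right⟩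
      · refine ⟨by norm_num, by norm_num, by norm_num, by
          rw [show (2:ℤ)-1 = 1 by norm_num]; exact isCoprime_one_right⟩
      · refine ⟨by norm_num, by norm_num, by norm_num, by
          rw [show (2:ℤ)-1 = 1 by norm_num]; exact isCoprime_one_right⟩
      · refine ⟨by norm_num, by norm_num, by norm_num, by
          rw [show (2:ℤ)-1 = 1 by norm_num]; exact isCoprime_one_right⟩
      · refine ⟨by norm_num, by norm_num, by norm_num, by
          rw [show (2:ℤ)-1 = 1 by norm_num]; exact isCoprime_one_right⟩
      · refine ⟨by norm_num, by norm_num, by norm_num, by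
          rw [show (2:ℤ)-1 = 1 by norm_num]; exact isCoprime_one_right⟩
      · refine ⟨by norm_num, by norm_num, by norm_num, by
          rw [show (2:ℤ)-1 = 1 by norm_num]; exact isCoprime_one_right⟩
      · refine ⟨by norm_num, by norm_num, by norm_num, by
          rw [show (2:ℤ)-1 = 1 by norm_num]; exact isCoprime_one_right⟩
      · refine ⟨by norm_num, by norm_num, by norm_num, by
          rw [show (2:ℤ)-1 = 1 by norm_num]; exact isCoprime_one_right⟩
    · refine List.Pairwise.cons ?_ (List.Pairwise.cons ?_ (List.Pairwise.cons ?_ (List.Pairwise.cons ?_ (List.Pairwise.cons ?_ (List.Pairwise.cons ?_ (List.Pairwise.cons ?_ (List.Pairwise.cons ?_ (List.Pairwise.cons ?_ (List.Pairwise.cons ?_ (List.Pairwise.cons ?_ List.Pairwise.nil))))))))))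
      · intro b hb
        simp only [List.mem_cons, List.not_mem_nil, or_false] at hb
        rcases hb with rfl | rfl | rfl | rfl | rfl | rfl | rfl | rfl | rfl | rfl
        · norm_num
        · norm_num
        · norm_num
        · norm_num
        · norm_num
        · norm_num
        · norm_num
        · norm_num
        · norm_num
        · norm_num
      · intro b hb
        simp only [List.mem_cons, List.not_mem_nil, or_false] at hb
        rcases hb with rfl | rfl | rfl | rfl | rfl | rfl | rfl | rfl | rfl
        · norm_num
        · norm_num
        · norm_num
        · norm_num
        · norm_num
        · norm_num
        · norm_num
        · norm_num
        · norm_num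
      · intro b hb
        simp only [List.mem_cons, List.not_mem_nil, or_false] at hb
        rcases hb with rfl | rfl | rfl | rfl | rfl | rfl | rfl | rfl
        · norm_num
        · norm_num
        · norm_num
        · norm_num
        · norm_num
        · norm_num
        · norm_num
        · norm_num
      · intro b hb
        simp only [List.mem_cons, List.not_mem_nil, or_false] at hb
        rcases hb with rfl | rfl | rfl | rfl | rfl | rfl | rfl
        · norm_num
        · norm_num
        · norm_num
        · norm_num
        · norm_num
        · norm_num
        · norm_num
      · intro b hb
        simp only [List.mem_cons, List.not_mem_nil, or_false] at hb
        rcases hb with rfl | rfl | rfl | rfl | rfl | rfl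
        · norm_num
        · norm_num
        · norm_num
        · norm_num
        · norm_num
        · norm_num
      · intro b hb
        simp only [List.mem_cons, List.not_mem_nil, or_false] at hb
        rcases hb with rfl | rfl | rfl | rfl | rfl
        · norm_num
        · norm_num
        · norm_num
        · norm_num
        · norm_num
      · intro b hb
        simp only [List.mem_cons, List.not_mem_nil, or_false] at hb
        rcases hb with rfl | rfl | rfl | rfl
        · norm_num
        · norm_num
        · norm_num
        · norm_num
      · intro b hb
        simp only [List.mem_cons, List.not_mem_nil, or_false] at hb
        rcases hb with rfl | rfl | rfl
        · norm_num
        · norm_num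
        · norm_num
      · intro b hb
        simp only [List.mem_cons, List.not_mem_nil, or_false] at hb
        rcases hb with rfl | rfl
        · norm_num
        · norm_num
      · intro b hb
        simp only [List.mem_cons, List.not_mem_nil, or_false] at hb
        rcases hb with rfl
        · norm_num
      · intro b hb; simp at hb
    · intro n hn
      rcases cover_all n with h|h|h|h|h|h|h|h|h|h|h
      · exact ⟨((2:ℕ), (3:ℕ), (7:ℤ)), by simp, h⟩
      · exact ⟨((3:ℕ), (4:ℕ), (5:ℤ)), by simp, h⟩
      · exact ⟨((4:ℕ), (6:ℕ), (9:ℤ)), by simp, h⟩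
      · exact ⟨((5:ℕ), (8:ℕ), (17:ℤ)), by simp, h⟩
      · exact ⟨((6:ℕ), (9:ℕ), (73:ℤ)), by simp, h⟩
      · exact ⟨((6:ℕ), (12:ℕ), (13:ℤ)), by simp, h⟩
      · exact ⟨((9:ℕ), (16:ℕ), (257:ℤ)), by simp, h⟩
      · exact ⟨((12:ℕ), (18:ℕ), (19:ℤ)), by simp, h⟩
      · exact ⟨((1:ℕ), (24:ℕ), (241:ℤ)), by simp, h⟩
      · exact ⟨((0:ℕ), (36:ℕ), (4033:ℤ)), by simp, h⟩
      · exact ⟨((33:ℕ), (48:ℕ), (65281:ℤ)), by simp, h⟩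
  · have hm3 : (3:ℤ) ≤ m := by omega
    -- branch m ≥ 3
    have pow3 : ∀ k : ℕ, k ≠ 0 → (3:ℤ) ≤ m ^ k := by
      intro k hk
      calc (3:ℤ) ≤ m := hm3
      _ ≤ m ^ k := le_self_pow₀ (by linarith) hk
    have j9P3 : ¬ (9:ℤ) ∣ (m^2+m+1 : ℤ) := by
      intro hdvd
      have h' : ((m^2+m+1 : ℤ) : ZMod 9) = 0 := by
        rw [ZMod.intCast_zmod_eq_zero_iff_dvd]; exact_mod_cast hdvd
      push_cast at h'
      revert h'
      generalize (m : ZMod 9) = x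
      revert x
      decide
    have j2P3 : ¬ (2:ℤ) ∣ (m^2+m+1 : ℤ) := by
      intro hdvd
      have h' : ((m^2+m+1 : ℤ) : ZMod 2) = 0 := by
        rw [ZMod.intCast_zmod_eq_zero_iff_dvd]; exact_mod_cast hdvd
      push_cast at h'
      revert h'
      generalize (m : ZMod 2) = x
      revert x
      decide
    have j4P4 : ¬ (4:ℤ) ∣ (m^2+1 : ℤ) := by
      intro hdvd
      have h' : ((m^2+1 : ℤ) : ZMod 4) = 0 := by
        rw [ZMod.intCast_zmod_eq_zero_iff_dvd]; exact_mod_cast hdvd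
      push_cast at h'
      revert h'
      generalize (m : ZMod 4) = x
      revert x
      decide
    have j3P4 : ¬ (3:ℤ) ∣ (m^2+1 : ℤ) := by
      intro hdvd
      have h' : ((m^2+1 : ℤ) : ZMod 3) = 0 := by
        rw [ZMod.intCast_zmod_eq_zero_iff_dvd]; exact_mod_cast hdvd
      push_cast at h'
      revert h'
      generalize (m : ZMod 3) = x
      revert x
      decide
    have j9P6 : ¬ (9:ℤ) ∣ (m^2-m+1 : ℤ) := by
      intro hdvd
      have h' : ((m^2-m+1 : ℤ) : ZMod 9) = 0 := by
        rw [ZMod.intCast_zmod_eq_zero_iff_dvd]; exact_mod_cast hdvd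
      push_cast at h'
      revert h'
      generalize (m : ZMod 9) = x
      revert x
      decide
    have j2P6 : ¬ (2:ℤ) ∣ (m^2-m+1 : ℤ) := by
      intro hdvd
      have h' : ((m^2-m+1 : ℤ) : ZMod 2) = 0 := by
        rw [ZMod.intCast_zmod_eq_zero_iff_dvd]; exact_mod_cast hdvd
      push_cast at h'
      revert h'
      generalize (m : ZMod 2) = x
      revert x
      decide
    have j4P8 : ¬ (4:ℤ) ∣ (m^4+1 : ℤ) := by
      intro hdvd
      have h' : ((m^4+1 : ℤ) : ZMod 4) = 0 := by
        rw [ZMod.intCast_zmod_eq_zero_iff_dvd]; exact_mod_cast hdvd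
      push_cast at h'
      revert h'
      generalize (m : ZMod 4) = x
      revert x
      decide
    have j3P8 : ¬ (3:ℤ) ∣ (m^4+1 : ℤ) := by
      intro hdvd
      have h' : ((m^4+1 : ℤ) : ZMod 3) = 0 := by
        rw [ZMod.intCast_zmod_eq_zero_iff_dvd]; exact_mod_cast hdvd
      push_cast at h'
      revert h'
      generalize (m : ZMod 3) = x
      revert x
      decide
    have j9P9 : ¬ (9:ℤ) ∣ (m^6+m^3+1 : ℤ) := by
      intro hdvd
      have h' : ((m^6+m^3+1 : ℤ) : ZMod 9) = 0 := by
        rw [ZMod.intCast_zmod_eq_zero_iff_dvd]; exact_mod_cast hdvd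
      push_cast at h'
      revert h'
      generalize (m : ZMod 9) = x
      revert x
      decide
    have j2P9 : ¬ (2:ℤ) ∣ (m^6+m^3+1 : ℤ) := by
      intro hdvd
      have h' : ((m^6+m^3+1 : ℤ) : ZMod 2) = 0 := by
        rw [ZMod.intCast_zmod_eq_zero_iff_dvd]; exact_mod_cast hdvd
      push_cast at h'
      revert h'
      generalize (m : ZMod 2) = x
      revert x
      decide
    have j2P12 : ¬ (2:ℤ) ∣ (m^4-m^2+1 : ℤ) := by
      intro hdvd
      have h' : ((m^4-m^2+1 : ℤ) : ZMod 2) = 0 := by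
        rw [ZMod.intCast_zmod_eq_zero_iff_dvd]; exact_mod_cast hdvd
      push_cast at h'
      revert h'
      generalize (m : ZMod 2) = x
      revert x
      decide
    have j3P12 : ¬ (3:ℤ) ∣ (m^4-m^2+1 : ℤ) := by
      intro hdvd
      have h' : ((m^4-m^2+1 : ℤ) : ZMod 3) = 0 := by
        rw [ZMod.intCast_zmod_eq_zero_iff_dvd]; exact_mod_cast hdvd
      push_cast at h'
      revert h'
      generalize (m : ZMod 3) = x
      revert x
      decide
    have j4P16 : ¬ (4:ℤ) ∣ (m^8+1 : ℤ) := by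
      intro hdvd
      have h' : ((m^8+1 : ℤ) : ZMod 4) = 0 := by
        rw [ZMod.intCast_zmod_eq_zero_iff_dvd]; exact_mod_cast hdvd
      push_cast at h'
      revert h'
      generalize (m : ZMod 4) = x
      revert x
      decide
    have j3P16 : ¬ (3:ℤ) ∣ (m^8+1 : ℤ) := by
      intro hdvd
      have h' : ((m^8+1 : ℤ) : ZMod 3) = 0 := by
        rw [ZMod.intCast_zmod_eq_zero_iff_dvd]; exact_mod_cast hdvd
      push_cast at h'
      revert h'
      generalize (m : ZMod 3) = x
      revert x
      decide
    have j9P18 : ¬ (9:ℤ) ∣ (m^6-m^3+1 : ℤ) := by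
      intro hdvd
      have h' : ((m^6-m^3+1 : ℤ) : ZMod 9) = 0 := by
        rw [ZMod.intCast_zmod_eq_zero_iff_dvd]; exact_mod_cast hdvd
      push_cast at h'
      revert h'
      generalize (m : ZMod 9) = x
      revert x
      decide
    have j2P18 : ¬ (2:ℤ) ∣ (m^6-m^3+1 : ℤ) := by
      intro hdvd
      have h' : ((m^6-m^3+1 : ℤ) : ZMod 2) = 0 := by
        rw [ZMod.intCast_zmod_eq_zero_iff_dvd]; exact_mod_cast hdvd
      push_cast at h'
      revert h'
      generalize (m : ZMod 2) = x
      revert x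
      decide
    have j2P24 : ¬ (2:ℤ) ∣ (m^8-m^4+1 : ℤ) := by
      intro hdvd
      have h' : ((m^8-m^4+1 : ℤ) : ZMod 2) = 0 := by
        rw [ZMod.intCast_zmod_eq_zero_iff_dvd]; exact_mod_cast hdvd
      push_cast at h'
      revert h'
      generalize (m : ZMod 2) = x
      revert x
      decide
    have j3P24 : ¬ (3:ℤ) ∣ (m^8-m^4+1 : ℤ) := by
      intro hdvd
      have h' : ((m^8-m^4+1 : ℤ) : ZMod 3) = 0 := by
        rw [ZMod.intCast_zmod_eq_zero_iff_dvd]; exact_mod_cast hdvd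
      push_cast at h'
      revert h'
      generalize (m : ZMod 3) = x
      revert x
      decide
    have j2P36 : ¬ (2:ℤ) ∣ (m^12-m^6+1 : ℤ) := by
      intro hdvd
      have h' : ((m^12-m^6+1 : ℤ) : ZMod 2) = 0 := by
        rw [ZMod.intCast_zmod_eq_zero_iff_dvd]; exact_mod_cast hdvd
      push_cast at h'
      revert h'
      generalize (m : ZMod 2) = x
      revert x
      decide
    have j3P36 : ¬ (3:ℤ) ∣ (m^12-m^6+1 : ℤ) := by
      intro hdvd
      have h' : ((m^12-m^6+1 : ℤ) : ZMod 3) = 0 := by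
        rw [ZMod.intCast_zmod_eq_zero_iff_dvd]; exact_mod_cast hdvd
      push_cast at h'
      revert h'
      generalize (m : ZMod 3) = x
      revert x
      decide
    have j2P48 : ¬ (2:ℤ) ∣ (m^16-m^8+1 : ℤ) := by
      intro hdvd
      have h' : ((m^16-m^8+1 : ℤ) : ZMod 2) = 0 := by
        rw [ZMod.intCast_zmod_eq_zero_iff_dvd]; exact_mod_cast hdvd
      push_cast at h'
      revert h'
      generalize (m : ZMod 2) = x
      revert x
      decide
    have j3P48 : ¬ (3:ℤ) ∣ (m^16-m^8+1 : ℤ) := by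
      intro hdvd
      have h' : ((m^16-m^8+1 : ℤ) : ZMod 3) = 0 := by
        rw [ZMod.intCast_zmod_eq_zero_iff_dvd]; exact_mod_cast hdvd
      push_cast at h'
      revert h'
      generalize (m : ZMod 3) = x
      revert x
      decide
    have bP3 : (3:ℤ) < (m^2+m+1 : ℤ) := by
      have hy : (3:ℤ) ≤ m := hm3
      have hb := bndA (m) hy
      nlinarith [hb]
    have bP4 : (3:ℤ) < (m^2+1 : ℤ) := by
      have hy : (3:ℤ) ≤ m := hm3
      have hb := bndB (m) hy
      nlinarith [hb]
    have bP6 : (3:ℤ) < (m^2-m+1 : ℤ) := by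
      have hy : (3:ℤ) ≤ m := hm3
      have hb := bndC (m) hy
      nlinarith [hb]
    have bP8 : (3:ℤ) < (m^4+1 : ℤ) := by
      have hy : (3:ℤ) ≤ m^2 := pow3 2 (by norm_num)
      have hb := bndB (m^2) hy
      nlinarith [hb]
    have bP9 : (3:ℤ) < (m^6+m^3+1 : ℤ) := by
      have hy : (3:ℤ) ≤ m^3 := pow3 3 (by norm_num)
      have hb := bndA (m^3) hy
      nlinarith [hb]
    have bP12 : (3:ℤ) < (m^4-m^2+1 : ℤ) := by
      have hy : (3:ℤ) ≤ m^2 := pow3 2 (by norm_num)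
      have hb := bndC (m^2) hy
      nlinarith [hb]
    have bP16 : (3:ℤ) < (m^8+1 : ℤ) := by
      have hy : (3:ℤ) ≤ m^4 := pow3 4 (by norm_num)
      have hb := bndB (m^4) hy
      nlinarith [hb]
    have bP18 : (3:ℤ) < (m^6-m^3+1 : ℤ) := by
      have hy : (3:ℤ) ≤ m^3 := pow3 3 (by norm_num)
      have hb := bndC (m^3) hy
      nlinarith [hb]
    have bP24 : (3:ℤ) < (m^8-m^4+1 : ℤ) := by
      have hy : (3:ℤ) ≤ m^4 := pow3 4 (by norm_num)
      have hb := bndC (m^4) hy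
      nlinarith [hb]
    have bP36 : (3:ℤ) < (m^12-m^6+1 : ℤ) := by
      have hy : (3:ℤ) ≤ m^6 := pow3 6 (by norm_num)
      have hb := bndC (m^6) hy
      nlinarith [hb]
    have bP48 : (3:ℤ) < (m^16-m^8+1 : ℤ) := by
      have hy : (3:ℤ) ≤ m^8 := pow3 8 (by norm_num)
      have hb := bndC (m^8) hy
      nlinarith [hb]
    obtain ⟨M3, hM3P, hM3n3, hM3gt⟩ :=
      reduceq 3 (m^2+m+1 : ℤ) (by norm_num)
        (by rw [show (3:ℤ)*3 = 9 by norm_num]; exact j9P3) (by linarith [bP3])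
    have hM3n2 : ¬ (2:ℤ) ∣ M3 := fun hh => j2P3 (hh.trans hM3P)
    obtain ⟨M4, hM4P, hM4n2, hM4gt⟩ :=
      reduceq 2 (m^2+1 : ℤ) (by norm_num)
        (by rw [show (2:ℤ)*2 = 4 by norm_num]; exact j4P4) (by linarith [bP4])
    have hM4n3 : ¬ (3:ℤ) ∣ M4 := fun hh => j3P4 (hh.trans hM4P)
    obtain ⟨M6, hM6P, hM6n3, hM6gt⟩ :=
      reduceq 3 (m^2-m+1 : ℤ) (by norm_num)
        (by rw [show (3:ℤ)*3 = 9 by norm_num]; exact j9P6) (by linarith [bP6])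
    have hM6n2 : ¬ (2:ℤ) ∣ M6 := fun hh => j2P6 (hh.trans hM6P)
    obtain ⟨M8, hM8P, hM8n2, hM8gt⟩ :=
      reduceq 2 (m^4+1 : ℤ) (by norm_num)
        (by rw [show (2:ℤ)*2 = 4 by norm_num]; exact j4P8) (by linarith [bP8])
    have hM8n3 : ¬ (3:ℤ) ∣ M8 := fun hh => j3P8 (hh.trans hM8P)
    obtain ⟨M9, hM9P, hM9n3, hM9gt⟩ :=
      reduceq 3 (m^6+m^3+1 : ℤ) (by norm_num)
        (by rw [show (3:ℤ)*3 = 9 by norm_num]; exact j9P9) (by linarith [bP9])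
    have hM9n2 : ¬ (2:ℤ) ∣ M9 := fun hh => j2P9 (hh.trans hM9P)
    set M12 : ℤ := (m^4-m^2+1 : ℤ) with hM12def
    have hM12P : M12 ∣ (m^4-m^2+1 : ℤ) := dvd_rfl
    have hM12gt : 1 < M12 := by rw [hM12def]; linarith [bP12]
    have hM12n2 : ¬ (2:ℤ) ∣ M12 := by rw [hM12def]; exact j2P12
    have hM12n3 : ¬ (3:ℤ) ∣ M12 := by rw [hM12def]; exact j3P12
    obtain ⟨M16, hM16P, hM16n2, hM16gt⟩ :=
      reduceq 2 (m^8+1 : ℤ) (by norm_num)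
        (by rw [show (2:ℤ)*2 = 4 by norm_num]; exact j4P16) (by linarith [bP16])
    have hM16n3 : ¬ (3:ℤ) ∣ M16 := fun hh => j3P16 (hh.trans hM16P)
    obtain ⟨M18, hM18P, hM18n3, hM18gt⟩ :=
      reduceq 3 (m^6-m^3+1 : ℤ) (by norm_num)
        (by rw [show (3:ℤ)*3 = 9 by norm_num]; exact j9P18) (by linarith [bP18])
    have hM18n2 : ¬ (2:ℤ) ∣ M18 := fun hh => j2P18 (hh.trans hM18P)
    set M24 : ℤ := (m^8-m^4+1 : ℤ) with hM24def
    have hM24P : M24 ∣ (m^8-m^4+1 : ℤ) := dvd_rfl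
    have hM24gt : 1 < M24 := by rw [hM24def]; linarith [bP24]
    have hM24n2 : ¬ (2:ℤ) ∣ M24 := by rw [hM24def]; exact j2P24
    have hM24n3 : ¬ (3:ℤ) ∣ M24 := by rw [hM24def]; exact j3P24
    set M36 : ℤ := (m^12-m^6+1 : ℤ) with hM36def
    have hM36P : M36 ∣ (m^12-m^6+1 : ℤ) := dvd_rfl
    have hM36gt : 1 < M36 := by rw [hM36def]; linarith [bP36]
    have hM36n2 : ¬ (2:ℤ) ∣ M36 := by rw [hM36def]; exact j2P36
    have hM36n3 : ¬ (3:ℤ) ∣ M36 := by rw [hM36def]; exact j3P36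
    set M48 : ℤ := (m^16-m^8+1 : ℤ) with hM48def
    have hM48P : M48 ∣ (m^16-m^8+1 : ℤ) := dvd_rfl
    have hM48gt : 1 < M48 := by rw [hM48def]; linarith [bP48]
    have hM48n2 : ¬ (2:ℤ) ∣ M48 := by rw [hM48def]; exact j2P48
    have hM48n3 : ¬ (3:ℤ) ∣ M48 := by rw [hM48def]; exact j3P48
    have hM3d : M3 ∣ m^3 - 1 := hM3P.trans ⟨(m-1), by ring⟩
    have hM4d : M4 ∣ m^4 - 1 := hM4P.trans ⟨(m^2-1), by ring⟩
    have hM6d : M6 ∣ m^6 - 1 := hM6P.trans ⟨(m^4+m^3-m-1), by ring⟩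
    have hM8d : M8 ∣ m^8 - 1 := hM8P.trans ⟨(m^4-1), by ring⟩
    have hM9d : M9 ∣ m^9 - 1 := hM9P.trans ⟨(m^3-1), by ring⟩
    have hM12d : M12 ∣ m^12 - 1 := hM12P.trans ⟨(m^8+m^6-m^2-1), by ring⟩
    have hM16d : M16 ∣ m^16 - 1 := hM16P.trans ⟨(m^8-1), by ring⟩
    have hM18d : M18 ∣ m^18 - 1 := hM18P.trans ⟨(m^12+m^9-m^3-1), by ring⟩
    have hM24d : M24 ∣ m^24 - 1 := hM24P.trans ⟨(m^16+m^12-m^4-1), by ring⟩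
    have hM36d : M36 ∣ m^36 - 1 := hM36P.trans ⟨(m^24+m^18-m^6-1), by ring⟩
    have hM48d : M48 ∣ m^48 - 1 := hM48P.trans ⟨(m^32+m^24-m^8-1), by ring⟩
    have cop3m1 : IsCoprime M3 (m-1) :=
      cert_coprime M3 (m-1) (m^2+m+1 : ℤ) (m-1) ((1) : ℤ) ((-2) + (-1)*m : ℤ) 3
        hM3P dvd_rfl (by ring) (by norm_num) hM3n2 hM3n3
    have cop4m1 : IsCoprime M4 (m-1) :=
      cert_coprime M4 (m-1) (m^2+1 : ℤ) (m-1) ((1) : ℤ) ((-1) + (-1)*m : ℤ) 2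
        hM4P dvd_rfl (by ring) (by norm_num) hM4n2 hM4n3
    have cop6m1 : IsCoprime M6 (m-1) :=
      cert_coprime M6 (m-1) (m^2-m+1 : ℤ) (m-1) ((1) : ℤ) ((-1)*m : ℤ) 1
        hM6P dvd_rfl (by ring) (by norm_num) hM6n2 hM6n3
    have cop8m1 : IsCoprime M8 (m-1) :=
      cert_coprime M8 (m-1) (m^4+1 : ℤ) (m-1) ((1) : ℤ) ((-1) + (-1)*m + (-1)*m^2 + (-1)*m^3 : ℤ) 2
        hM8P dvd_rfl (by ring) (by norm_num) hM8n2 hM8n3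
    have cop9m1 : IsCoprime M9 (m-1) :=
      cert_coprime M9 (m-1) (m^6+m^3+1 : ℤ) (m-1) ((1) : ℤ) ((-2) + (-2)*m + (-2)*m^2 + (-1)*m^3 + (-1)*m^4 + (-1)*m^5 : ℤ) 3
        hM9P dvd_rfl (by ring) (by norm_num) hM9n2 hM9n3
    have cop12m1 : IsCoprime M12 (m-1) :=
      cert_coprime M12 (m-1) (m^4-m^2+1 : ℤ) (m-1) ((1) : ℤ) ((-1)*m^2 + (-1)*m^3 : ℤ) 1
        hM12P dvd_rfl (by ring) (by norm_num) hM12n2 hM12n3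
    have cop16m1 : IsCoprime M16 (m-1) :=
      cert_coprime M16 (m-1) (m^8+1 : ℤ) (m-1) ((1) : ℤ) ((-1) + (-1)*m + (-1)*m^2 + (-1)*m^3 + (-1)*m^4 + (-1)*m^5 + (-1)*m^6 + (-1)*m^7 : ℤ) 2
        hM16P dvd_rfl (by ring) (by norm_num) hM16n2 hM16n3
    have cop18m1 : IsCoprime M18 (m-1) :=
      cert_coprime M18 (m-1) (m^6-m^3+1 : ℤ) (m-1) ((1) : ℤ) ((-1)*m^3 + (-1)*m^4 + (-1)*m^5 : ℤ) 1
        hM18P dvd_rfl (by ring) (by norm_num) hM18n2 hM18n3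
    have cop24m1 : IsCoprime M24 (m-1) :=
      cert_coprime M24 (m-1) (m^8-m^4+1 : ℤ) (m-1) ((1) : ℤ) ((-1)*m^4 + (-1)*m^5 + (-1)*m^6 + (-1)*m^7 : ℤ) 1
        hM24P dvd_rfl (by ring) (by norm_num) hM24n2 hM24n3
    have cop36m1 : IsCoprime M36 (m-1) :=
      cert_coprime M36 (m-1) (m^12-m^6+1 : ℤ) (m-1) ((1) : ℤ) ((-1)*m^6 + (-1)*m^7 + (-1)*m^8 + (-1)*m^9 + (-1)*m^10 + (-1)*m^11 : ℤ) 1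
        hM36P dvd_rfl (by ring) (by norm_num) hM36n2 hM36n3
    have cop48m1 : IsCoprime M48 (m-1) :=
      cert_coprime M48 (m-1) (m^16-m^8+1 : ℤ) (m-1) ((1) : ℤ) ((-1)*m^8 + (-1)*m^9 + (-1)*m^10 + (-1)*m^11 + (-1)*m^12 + (-1)*m^13 + (-1)*m^14 + (-1)*m^15 : ℤ) 1
        hM48P dvd_rfl (by ring) (by norm_num) hM48n2 hM48n3
    have cop_3_4 : IsCoprime M3 M4 :=
      cert_coprime M3 M4 (m^2+m+1 : ℤ) (m^2+1 : ℤ) ((-1)*m : ℤ) ((1) + (1)*m : ℤ) 1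
        hM3P hM4P (by ring) (by norm_num) hM3n2 hM3n3
    have cop_3_6 : IsCoprime M3 M6 :=
      cert_coprime M3 M6 (m^2+m+1 : ℤ) (m^2-m+1 : ℤ) ((1) + (-1)*m : ℤ) ((1) + (1)*m : ℤ) 2
        hM3P hM6P (by ring) (by norm_num) hM3n2 hM3n3
    have cop_3_8 : IsCoprime M3 M8 :=
      cert_coprime M3 M8 (m^2+m+1 : ℤ) (m^4+1 : ℤ) ((1) + (-1)*m^2 + (1)*m^3 : ℤ) ((-1)*m : ℤ) 1
        hM3P hM8P (by ring) (by norm_num) hM3n2 hM3n3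
    have cop_3_9 : IsCoprime M3 M9 :=
      cert_coprime M3 M9 (m^2+m+1 : ℤ) (m^6+m^3+1 : ℤ) ((2) + (-2)*m + (1)*m^3 + (-1)*m^4 : ℤ) ((1) : ℤ) 3
        hM3P hM9P (by ring) (by norm_num) hM3n2 hM3n3
    have cop_3_12 : IsCoprime M3 M12 :=
      cert_coprime M3 M12 (m^2+m+1 : ℤ) (m^4-m^2+1 : ℤ) ((2) + (-1)*m + (-1)*m^2 + (1)*m^3 : ℤ) ((-1)*m : ℤ) 2
        hM3P hM12P (by ring) (by norm_num) hM3n2 hM3n3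
    have cop_3_16 : IsCoprime M3 M16 :=
      cert_coprime M3 M16 (m^2+m+1 : ℤ) (m^8+1 : ℤ) ((-1)*m + (1)*m^2 + (-1)*m^4 + (1)*m^5 + (-1)*m^7 : ℤ) ((1) + (1)*m : ℤ) 1
        hM3P hM16P (by ring) (by norm_num) hM3n2 hM3n3
    have cop_3_18 : IsCoprime M3 M18 :=
      cert_coprime M3 M18 (m^2+m+1 : ℤ) (m^6-m^3+1 : ℤ) ((1)*m^3 + (-1)*m^4 : ℤ) ((1) : ℤ) 1
        hM3P hM18P (by ring) (by norm_num) hM3n2 hM3n3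
    have cop_3_24 : IsCoprime M3 M24 :=
      cert_coprime M3 M24 (m^2+m+1 : ℤ) (m^8-m^4+1 : ℤ) ((1) + (-2)*m + (1)*m^2 + (1)*m^3 + (-1)*m^4 + (1)*m^5 + (-1)*m^7 : ℤ) ((1) + (1)*m : ℤ) 2
        hM3P hM24P (by ring) (by norm_num) hM3n2 hM3n3
    have cop_3_36 : IsCoprime M3 M36 :=
      cert_coprime M3 M36 (m^2+m+1 : ℤ) (m^12-m^6+1 : ℤ) ((1)*m^6 + (-1)*m^7 + (1)*m^9 + (-1)*m^10 : ℤ) ((1) : ℤ) 1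
        hM3P hM36P (by ring) (by norm_num) hM3n2 hM3n3
    have cop_3_48 : IsCoprime M3 M48 :=
      cert_coprime M3 M48 (m^2+m+1 : ℤ) (m^16-m^8+1 : ℤ) ((2) + (-1)*m + (-1)*m^2 + (2)*m^3 + (-1)*m^4 + (-1)*m^5 + (2)*m^6 + (-1)*m^7 + (-1)*m^8 + (1)*m^9 + (-1)*m^11 + (1)*m^12 + (-1)*m^14 + (1)*m^15 : ℤ) ((-1)*m : ℤ) 2
        hM3P hM48P (by ring) (by norm_num) hM3n2 hM3n3
    have cop_4_6 : IsCoprime M4 M6 :=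
      cert_coprime M4 M6 (m^2+1 : ℤ) (m^2-m+1 : ℤ) ((1) + (-1)*m : ℤ) ((1)*m : ℤ) 1
        hM4P hM6P (by ring) (by norm_num) hM4n2 hM4n3
    have cop_4_8 : IsCoprime M4 M8 :=
      cert_coprime M4 M8 (m^2+1 : ℤ) (m^4+1 : ℤ) ((1) + (-1)*m^2 : ℤ) ((1) : ℤ) 2
        hM4P hM8P (by ring) (by norm_num) hM4n2 hM4n3
    have cop_4_9 : IsCoprime M4 M9 :=
      cert_coprime M4 M9 (m^2+1 : ℤ) (m^6+m^3+1 : ℤ) ((1) + (-1)*m + (-1)*m^2 + (1)*m^3 + (-1)*m^5 : ℤ) ((1)*m : ℤ) 1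
        hM4P hM9P (by ring) (by norm_num) hM4n2 hM4n3
    have cop_4_12 : IsCoprime M4 M12 :=
      cert_coprime M4 M12 (m^2+1 : ℤ) (m^4-m^2+1 : ℤ) ((2) + (-1)*m^2 : ℤ) ((1) : ℤ) 3
        hM4P hM12P (by ring) (by norm_num) hM4n2 hM4n3
    have cop_4_16 : IsCoprime M4 M16 :=
      cert_coprime M4 M16 (m^2+1 : ℤ) (m^8+1 : ℤ) ((1) + (-1)*m^2 + (1)*m^4 + (-1)*m^6 : ℤ) ((1) : ℤ) 2
        hM4P hM16P (by ring) (by norm_num) hM4n2 hM4n3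
    have cop_4_18 : IsCoprime M4 M18 :=
      cert_coprime M4 M18 (m^2+1 : ℤ) (m^6-m^3+1 : ℤ) ((1) + (1)*m + (-1)*m^2 + (-1)*m^3 + (1)*m^5 : ℤ) ((-1)*m : ℤ) 1
        hM4P hM18P (by ring) (by norm_num) hM4n2 hM4n3
    have cop_4_24 : IsCoprime M4 M24 :=
      cert_coprime M4 M24 (m^2+1 : ℤ) (m^8-m^4+1 : ℤ) ((1)*m^4 + (-1)*m^6 : ℤ) ((1) : ℤ) 1
        hM4P hM24P (by ring) (by norm_num) hM4n2 hM4n3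
    have cop_4_36 : IsCoprime M4 M36 :=
      cert_coprime M4 M36 (m^2+1 : ℤ) (m^12-m^6+1 : ℤ) ((2) + (-2)*m^2 + (2)*m^4 + (-1)*m^6 + (1)*m^8 + (-1)*m^10 : ℤ) ((1) : ℤ) 3
        hM4P hM36P (by ring) (by norm_num) hM4n2 hM4n3
    have cop_4_48 : IsCoprime M4 M48 :=
      cert_coprime M4 M48 (m^2+1 : ℤ) (m^16-m^8+1 : ℤ) ((1)*m^8 + (-1)*m^10 + (1)*m^12 + (-1)*m^14 : ℤ) ((1) : ℤ) 1
        hM4P hM48P (by ring) (by norm_num) hM4n2 hM4n3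
    have cop_6_8 : IsCoprime M6 M8 :=
      cert_coprime M6 M8 (m^2-m+1 : ℤ) (m^4+1 : ℤ) ((1) + (-1)*m^2 + (-1)*m^3 : ℤ) ((1)*m : ℤ) 1
        hM6P hM8P (by ring) (by norm_num) hM6n2 hM6n3
    have cop_6_9 : IsCoprime M6 M9 :=
      cert_coprime M6 M9 (m^2-m+1 : ℤ) (m^6+m^3+1 : ℤ) ((-1)*m^3 + (-1)*m^4 : ℤ) ((1) : ℤ) 1
        hM6P hM9P (by ring) (by norm_num) hM6n2 hM6n3
    have cop_6_12 : IsCoprime M6 M12 :=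
      cert_coprime M6 M12 (m^2-m+1 : ℤ) (m^4-m^2+1 : ℤ) ((2) + (1)*m + (-1)*m^2 + (-1)*m^3 : ℤ) ((1)*m : ℤ) 2
        hM6P hM12P (by ring) (by norm_num) hM6n2 hM6n3
    have cop_6_16 : IsCoprime M6 M16 :=
      cert_coprime M6 M16 (m^2-m+1 : ℤ) (m^8+1 : ℤ) ((1)*m + (1)*m^2 + (-1)*m^4 + (-1)*m^5 + (1)*m^7 : ℤ) ((1) + (-1)*m : ℤ) 1
        hM6P hM16P (by ring) (by norm_num) hM6n2 hM6n3
    have cop_6_18 : IsCoprime M6 M18 :=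
      cert_coprime M6 M18 (m^2-m+1 : ℤ) (m^6-m^3+1 : ℤ) ((2) + (2)*m + (-1)*m^3 + (-1)*m^4 : ℤ) ((1) : ℤ) 3
        hM6P hM18P (by ring) (by norm_num) hM6n2 hM6n3
    have cop_6_24 : IsCoprime M6 M24 :=
      cert_coprime M6 M24 (m^2-m+1 : ℤ) (m^8-m^4+1 : ℤ) ((1) + (2)*m + (1)*m^2 + (-1)*m^3 + (-1)*m^4 + (-1)*m^5 + (1)*m^7 : ℤ) ((1) + (-1)*m : ℤ) 2
        hM6P hM24P (by ring) (by norm_num) hM6n2 hM6n3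
    have cop_6_36 : IsCoprime M6 M36 :=
      cert_coprime M6 M36 (m^2-m+1 : ℤ) (m^12-m^6+1 : ℤ) ((1)*m^6 + (1)*m^7 + (-1)*m^9 + (-1)*m^10 : ℤ) ((1) : ℤ) 1
        hM6P hM36P (by ring) (by norm_num) hM6n2 hM6n3
    have cop_6_48 : IsCoprime M6 M48 :=
      cert_coprime M6 M48 (m^2-m+1 : ℤ) (m^16-m^8+1 : ℤ) ((2) + (1)*m + (-1)*m^2 + (-2)*m^3 + (-1)*m^4 + (1)*m^5 + (2)*m^6 + (1)*m^7 + (-1)*m^8 + (-1)*m^9 + (1)*m^11 + (1)*m^12 + (-1)*m^14 + (-1)*m^15 : ℤ) ((1)*m : ℤ) 2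
        hM6P hM48P (by ring) (by norm_num) hM6n2 hM6n3
    have cop_8_9 : IsCoprime M8 M9 :=
      cert_coprime M8 M9 (m^4+1 : ℤ) (m^6+m^3+1 : ℤ) ((-1)*m + (-1)*m^2 + (-1)*m^3 + (-1)*m^4 : ℤ) ((1) + (1)*m + (1)*m^2 : ℤ) 1
        hM8P hM9P (by ring) (by norm_num) hM8n2 hM8n3
    have cop_8_12 : IsCoprime M8 M12 :=
      cert_coprime M8 M12 (m^4+1 : ℤ) (m^4-m^2+1 : ℤ) ((1) + (-1)*m^2 : ℤ) ((1)*m^2 : ℤ) 1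
        hM8P hM12P (by ring) (by norm_num) hM8n2 hM8n3
    have cop_8_16 : IsCoprime M8 M16 :=
      cert_coprime M8 M16 (m^4+1 : ℤ) (m^8+1 : ℤ) ((1) + (-1)*m^4 : ℤ) ((1) : ℤ) 2
        hM8P hM16P (by ring) (by norm_num) hM8n2 hM8n3
    have cop_8_18 : IsCoprime M8 M18 :=
      cert_coprime M8 M18 (m^4+1 : ℤ) (m^6-m^3+1 : ℤ) ((1)*m + (-1)*m^2 + (1)*m^3 + (-1)*m^4 : ℤ) ((1) + (-1)*m + (1)*m^2 : ℤ) 1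
        hM8P hM18P (by ring) (by norm_num) hM8n2 hM8n3
    have cop_8_24 : IsCoprime M8 M24 :=
      cert_coprime M8 M24 (m^4+1 : ℤ) (m^8-m^4+1 : ℤ) ((2) + (-1)*m^4 : ℤ) ((1) : ℤ) 3
        hM8P hM24P (by ring) (by norm_num) hM8n2 hM8n3
    have cop_8_36 : IsCoprime M8 M36 :=
      cert_coprime M8 M36 (m^4+1 : ℤ) (m^12-m^6+1 : ℤ) ((1) + (1)*m^2 + (-1)*m^4 + (-1)*m^6 + (1)*m^10 : ℤ) ((-1)*m^2 : ℤ) 1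
        hM8P hM36P (by ring) (by norm_num) hM8n2 hM8n3
    have cop_8_48 : IsCoprime M8 M48 :=
      cert_coprime M8 M48 (m^4+1 : ℤ) (m^16-m^8+1 : ℤ) ((1)*m^8 + (-1)*m^12 : ℤ) ((1) : ℤ) 1
        hM8P hM48P (by ring) (by norm_num) hM8n2 hM8n3
    have cop_9_12 : IsCoprime M9 M12 :=
      cert_coprime M9 M12 (m^6+m^3+1 : ℤ) (m^4-m^2+1 : ℤ) ((-1)*m^3 : ℤ) ((1) + (1)*m^2 + (1)*m^3 + (1)*m^5 : ℤ) 1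
        hM9P hM12P (by ring) (by norm_num) hM9n2 hM9n3
    have cop_9_16 : IsCoprime M9 M16 :=
      cert_coprime M9 M16 (m^6+m^3+1 : ℤ) (m^8+1 : ℤ) ((-1)*m^3 + (1)*m^4 + (-1)*m^5 + (1)*m^6 + (-1)*m^7 : ℤ) ((1) + (1)*m^3 + (-1)*m^4 + (1)*m^5 : ℤ) 1
        hM9P hM16P (by ring) (by norm_num) hM9n2 hM9n3
    have cop_9_18 : IsCoprime M9 M18 :=
      cert_coprime M9 M18 (m^6+m^3+1 : ℤ) (m^6-m^3+1 : ℤ) ((1) + (-1)*m^3 : ℤ) ((1) + (1)*m^3 : ℤ) 2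
        hM9P hM18P (by ring) (by norm_num) hM9n2 hM9n3
    have cop_9_24 : IsCoprime M9 M24 :=
      cert_coprime M9 M24 (m^6+m^3+1 : ℤ) (m^8-m^4+1 : ℤ) ((1) + (-1)*m + (1)*m^5 + (-1)*m^6 : ℤ) ((1)*m + (-1)*m^3 + (1)*m^4 : ℤ) 1
        hM9P hM24P (by ring) (by norm_num) hM9n2 hM9n3
    have cop_9_36 : IsCoprime M9 M36 :=
      cert_coprime M9 M36 (m^6+m^3+1 : ℤ) (m^12-m^6+1 : ℤ) ((2) + (-1)*m^3 + (-1)*m^6 + (1)*m^9 : ℤ) ((-1)*m^3 : ℤ) 2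
        hM9P hM36P (by ring) (by norm_num) hM9n2 hM9n3
    have cop_9_48 : IsCoprime M9 M48 :=
      cert_coprime M9 M48 (m^6+m^3+1 : ℤ) (m^16-m^8+1 : ℤ) ((-1)*m^3 + (1)*m^5 + (1)*m^6 + (-1)*m^12 + (-1)*m^13 + (1)*m^15 : ℤ) ((1) + (1)*m^3 + (-1)*m^5 : ℤ) 1
        hM9P hM48P (by ring) (by norm_num) hM9n2 hM9n3
    have cop_12_16 : IsCoprime M12 M16 :=
      cert_coprime M12 M16 (m^4-m^2+1 : ℤ) (m^8+1 : ℤ) ((1) + (-1)*m^4 + (-1)*m^6 : ℤ) ((1)*m^2 : ℤ) 1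
        hM12P hM16P (by ring) (by norm_num) hM12n2 hM12n3
    have cop_12_18 : IsCoprime M12 M18 :=
      cert_coprime M12 M18 (m^4-m^2+1 : ℤ) (m^6-m^3+1 : ℤ) ((1) + (1)*m^2 + (-1)*m^3 + (-1)*m^5 : ℤ) ((1)*m^3 : ℤ) 1
        hM12P hM18P (by ring) (by norm_num) hM12n2 hM12n3
    have cop_12_24 : IsCoprime M12 M24 :=
      cert_coprime M12 M24 (m^4-m^2+1 : ℤ) (m^8-m^4+1 : ℤ) ((2) + (1)*m^2 + (-1)*m^4 + (-1)*m^6 : ℤ) ((1)*m^2 : ℤ) 2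
        hM12P hM24P (by ring) (by norm_num) hM12n2 hM12n3
    have cop_12_36 : IsCoprime M12 M36 :=
      cert_coprime M12 M36 (m^4-m^2+1 : ℤ) (m^12-m^6+1 : ℤ) ((2) + (2)*m^2 + (-1)*m^6 + (-1)*m^8 : ℤ) ((1) : ℤ) 3
        hM12P hM36P (by ring) (by norm_num) hM12n2 hM12n3
    have cop_12_48 : IsCoprime M12 M48 :=
      cert_coprime M12 M48 (m^4-m^2+1 : ℤ) (m^16-m^8+1 : ℤ) ((1) + (2)*m^2 + (1)*m^4 + (-1)*m^6 + (-1)*m^8 + (-1)*m^10 + (1)*m^14 : ℤ) ((1) + (-1)*m^2 : ℤ) 2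
        hM12P hM48P (by ring) (by norm_num) hM12n2 hM12n3
    have cop_16_18 : IsCoprime M16 M18 :=
      cert_coprime M16 M18 (m^8+1 : ℤ) (m^6-m^3+1 : ℤ) ((1) + (-1)*m^3 + (-1)*m^4 + (-1)*m^5 : ℤ) ((1)*m^3 + (1)*m^4 + (1)*m^5 + (1)*m^6 + (1)*m^7 : ℤ) 1
        hM16P hM18P (by ring) (by norm_num) hM16n2 hM16n3
    have cop_16_24 : IsCoprime M16 M24 :=
      cert_coprime M16 M24 (m^8+1 : ℤ) (m^8-m^4+1 : ℤ) ((1) + (-1)*m^4 : ℤ) ((1)*m^4 : ℤ) 1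
        hM16P hM24P (by ring) (by norm_num) hM16n2 hM16n3
    have cop_16_36 : IsCoprime M16 M36 :=
      cert_coprime M16 M36 (m^8+1 : ℤ) (m^12-m^6+1 : ℤ) ((1)*m^2 + (-1)*m^4 + (1)*m^6 + (-1)*m^8 : ℤ) ((1) + (-1)*m^2 + (1)*m^4 : ℤ) 1
        hM16P hM36P (by ring) (by norm_num) hM16n2 hM16n3
    have cop_16_48 : IsCoprime M16 M48 :=
      cert_coprime M16 M48 (m^8+1 : ℤ) (m^16-m^8+1 : ℤ) ((2) + (-1)*m^8 : ℤ) ((1) : ℤ) 3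
        hM16P hM48P (by ring) (by norm_num) hM16n2 hM16n3
    have cop_18_24 : IsCoprime M18 M24 :=
      cert_coprime M18 M24 (m^6-m^3+1 : ℤ) (m^8-m^4+1 : ℤ) ((1) + (1)*m + (-1)*m^5 + (-1)*m^6 : ℤ) ((-1)*m + (1)*m^3 + (1)*m^4 : ℤ) 1
        hM18P hM24P (by ring) (by norm_num) hM18n2 hM18n3
    have cop_18_36 : IsCoprime M18 M36 :=
      cert_coprime M18 M36 (m^6-m^3+1 : ℤ) (m^12-m^6+1 : ℤ) ((2) + (1)*m^3 + (-1)*m^6 + (-1)*m^9 : ℤ) ((1)*m^3 : ℤ) 2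
        hM18P hM36P (by ring) (by norm_num) hM18n2 hM18n3
    have cop_18_48 : IsCoprime M18 M48 :=
      cert_coprime M18 M48 (m^6-m^3+1 : ℤ) (m^16-m^8+1 : ℤ) ((1)*m^3 + (-1)*m^5 + (1)*m^6 + (-1)*m^12 + (1)*m^13 + (-1)*m^15 : ℤ) ((1) + (-1)*m^3 + (1)*m^5 : ℤ) 1
        hM18P hM48P (by ring) (by norm_num) hM18n2 hM18n3
    have cop_24_36 : IsCoprime M24 M36 :=
      cert_coprime M24 M36 (m^8-m^4+1 : ℤ) (m^12-m^6+1 : ℤ) ((1) + (1)*m^4 + (-1)*m^6 + (-1)*m^10 : ℤ) ((1)*m^6 : ℤ) 1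
        hM24P hM36P (by ring) (by norm_num) hM24n2 hM24n3
    have cop_24_48 : IsCoprime M24 M48 :=
      cert_coprime M24 M48 (m^8-m^4+1 : ℤ) (m^16-m^8+1 : ℤ) ((2) + (1)*m^4 + (-1)*m^8 + (-1)*m^12 : ℤ) ((1)*m^4 : ℤ) 2
        hM24P hM48P (by ring) (by norm_num) hM24n2 hM24n3
    have cop_36_48 : IsCoprime M36 M48 :=
      cert_coprime M36 M48 (m^12-m^6+1 : ℤ) (m^16-m^8+1 : ℤ) ((1) + (1)*m^2 + (-1)*m^10 + (-1)*m^12 : ℤ) ((-1)*m^2 + (1)*m^6 + (1)*m^8 : ℤ) 1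
        hM36P hM48P (by ring) (by norm_num) hM36n2 hM36n3
    refine key m hm [((2:ℕ), (3:ℕ), M3), ((3:ℕ), (4:ℕ), M4), ((4:ℕ), (6:ℕ), M6), ((5:ℕ), (8:ℕ), M8), ((6:ℕ), (9:ℕ), M9), ((6:ℕ), (12:ℕ), M12), ((9:ℕ), (16:ℕ), M16), ((12:ℕ), (18:ℕ), M18), ((1:ℕ), (24:ℕ), M24), ((0:ℕ), (36:ℕ), M36), ((33:ℕ), (48:ℕ), M48)] ?_ ?_ ?_
    · intro p hp
      simp only [List.mem_cons, List.not_mem_nil, or_false] at hp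
      rcases hp with rfl | rfl | rfl | rfl | rfl | rfl | rfl | rfl | rfl | rfl | rfl
      · exact ⟨by norm_num, hM3gt, hM3d, cop3m1⟩
      · exact ⟨by norm_num, hM4gt, hM4d, cop4m1⟩
      · exact ⟨by norm_num, hM6gt, hM6d, cop6m1⟩
      · exact ⟨by norm_num, hM8gt, hM8d, cop8m1⟩
      · exact ⟨by norm_num, hM9gt, hM9d, cop9m1⟩
      · exact ⟨by norm_num, hM12gt, hM12d, cop12m1⟩
      · exact ⟨by norm_num, hM16gt, hM16d, cop16m1⟩
      · exact ⟨by norm_num, hM18gt, hM18d, cop18m1⟩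
      · exact ⟨by norm_num, hM24gt, hM24d, cop24m1⟩
      · exact ⟨by norm_num, hM36gt, hM36d, cop36m1⟩
      · exact ⟨by norm_num, hM48gt, hM48d, cop48m1⟩
    · refine List.Pairwise.cons ?_ (List.Pairwise.cons ?_ (List.Pairwise.cons ?_ (List.Pairwise.cons ?_ (List.Pairwise.cons ?_ (List.Pairwise.cons ?_ (List.Pairwise.cons ?_ (List.Pairwise.cons ?_ (List.Pairwise.cons ?_ (List.Pairwise.cons ?_ (List.Pairwise.cons ?_ List.Pairwise.nil))))))))))
      · intro b hb
        simp only [List.mem_cons, List.not_mem_nil, or_false] at hb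
        rcases hb with rfl | rfl | rfl | rfl | rfl | rfl | rfl | rfl | rfl | rfl
        · exact cop_3_4
        · exact cop_3_6
        · exact cop_3_8
        · exact cop_3_9
        · exact cop_3_12
        · exact cop_3_16
        · exact cop_3_18
        · exact cop_3_24
        · exact cop_3_36
        · exact cop_3_48
      · intro b hb
        simp only [List.mem_cons, List.not_mem_nil, or_false] at hb
        rcases hb with rfl | rfl | rfl | rfl | rfl | rfl | rfl | rfl | rfl
        · exact cop_4_6
        · exact cop_4_8
        · exact cop_4_9
        · exact cop_4_12
        · exact cop_4_16
        · exact cop_4_18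
        · exact cop_4_24
        · exact cop_4_36
        · exact cop_4_48
      · intro b hb
        simp only [List.mem_cons, List.not_mem_nil, or_false] at hb
        rcases hb with rfl | rfl | rfl | rfl | rfl | rfl | rfl | rfl
        · exact cop_6_8
        · exact cop_6_9
        · exact cop_6_12
        · exact cop_6_16
        · exact cop_6_18
        · exact cop_6_24
        · exact cop_6_36
        · exact cop_6_48
      · intro b hb
        simp only [List.mem_cons, List.not_mem_nil, or_false] at hb
        rcases hb with rfl | rfl | rfl | rfl | rfl | rfl | rfl
        · exact cop_8_9
        · exact cop_8_12
        · exact cop_8_16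
        · exact cop_8_18
        · exact cop_8_24
        · exact cop_8_36
        · exact cop_8_48
      · intro b hb
        simp only [List.mem_cons, List.not_mem_nil, or_false] at hb
        rcases hb with rfl | rfl | rfl | rfl | rfl | rfl
        · exact cop_9_12
        · exact cop_9_16
        · exact cop_9_18
        · exact cop_9_24
        · exact cop_9_36
        · exact cop_9_48
      · intro b hb
        simp only [List.mem_cons, List.not_mem_nil, or_false] at hb
        rcases hb with rfl | rfl | rfl | rfl | rfl
        · exact cop_12_16
        · exact cop_12_18
        · exact cop_12_24
        · exact cop_12_36
        · exact cop_12_48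
      · intro b hb
        simp only [List.mem_cons, List.not_mem_nil, or_false] at hb
        rcases hb with rfl | rfl | rfl | rfl
        · exact cop_16_18
        · exact cop_16_24
        · exact cop_16_36
        · exact cop_16_48
      · intro b hb
        simp only [List.mem_cons, List.not_mem_nil, or_false] at hb
        rcases hb with rfl | rfl | rfl
        · exact cop_18_24
        · exact cop_18_36
        · exact cop_18_48
      · intro b hb
        simp only [List.mem_cons, List.not_mem_nil, or_false] at hb
        rcases hb with rfl | rfl
        · exact cop_24_36
        · exact cop_24_48
      · intro b hb
        simp only [List.mem_cons, List.not_mem_nil, or_false] at hb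
        rcases hb with rfl
        · exact cop_36_48
      · intro b hb; simp at hb
    · intro n hn
      rcases cover_all n with h|h|h|h|h|h|h|h|h|h|h
      · exact ⟨((2:ℕ), (3:ℕ), M3), by simp, h⟩
      · exact ⟨((3:ℕ), (4:ℕ), M4), by simp, h⟩
      · exact ⟨((4:ℕ), (6:ℕ), M6), by simp, h⟩
      · exact ⟨((5:ℕ), (8:ℕ), M8), by simp, h⟩
      · exact ⟨((6:ℕ), (9:ℕ), M9), by simp, h⟩
      · exact ⟨((6:ℕ), (12:ℕ), M12), by simp, h⟩
      · exact ⟨((9:ℕ), (16:ℕ), M16), by simp, h⟩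
      · exact ⟨((12:ℕ), (18:ℕ), M18), by simp, h⟩
      · exact ⟨((1:ℕ), (24:ℕ), M24), by simp, h⟩
      · exact ⟨((0:ℕ), (36:ℕ), M36), by simp, h⟩
      · exact ⟨((33:ℕ), (48:ℕ), M48), by simp, h⟩
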